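/- arXiv:2305.02736 — 2 statements merged into one kernel-verified Lean document; each statement's English description precedes it below -/
import Mathlib

section
/- Let U be a ULTS over a finite alphabet Σ. Then L(U) = ∅ if and only if there exists an inductive invariant for U. -/
/-- A labeled transition system whose states carry a compatible quasi order
(an upward-compatible LTS, ULTS): the final states are upward closed and the
quasi order is a simulation relation. -/
structure ULTS (A : Type) : Type 1 where
  S : Type
  le : S → S → Prop
  le_refl : ∀ s, le s s
  le_trans : ∀ ⦃s t u⦄, le s t → le t u → le s u
  init : Set S
  tr : S → A → Set S
  final : Set S
  final_up : ∀ ⦃s t⦄, s ∈ final → le s t → t ∈ final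
  sim : ∀ ⦃s t⦄ (a : A) ⦃s'⦄, le s t → s' ∈ tr s a → ∃ t', t' ∈ tr t a ∧ le s' t'

namespace ULTS

variable {A : Type}

/-- One-step successors of a set of states. -/
def stepSet (U : ULTS A) (P : Set U.S) (a : A) : Set U.S := ⋃ s ∈ P, U.tr s a

/-- States reachable from `P` by reading a word. -/
def reachSet (U : ULTS A) (P : Set U.S) : List A → Set U.S
  | [] => P
  | a :: w => U.reachSet (U.stepSet P a) w

/-- The language of a ULTS: words that can reach a final state from an initial state. -/
def lang (U : ULTS A) : Set (List A) := {w | (U.reachSet U.init w ∩ U.final).Nonempty}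

/-- The quasi order of the ULTS is a well quasi order; a ULTS with this property
is a (upward-compatible) WSTS. -/
def IsWQO (U : ULTS A) : Prop := ∀ f : ℕ → U.S, ∃ i j, i < j ∧ U.le (f i) (f j)

/-- A ULTS is deterministic if the set of initial states and every transition image
are singletons. -/
def Deterministic (U : ULTS A) : Prop :=
  (∃ s, U.init = {s}) ∧ ∀ s a, ∃ t, U.tr s a = {t}

end ULTS

/-- A language is regular if it is accepted by a deterministic finite automaton
with finitely many states. -/
def IsRegularLang {A : Type} (L : Set (List A)) : Prop :=
  ∃ (Q : Type) (_ : Fintype Q) (M : DFA A Q), M.accepts = L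

/-- Two languages are regularly separable if some regular language contains the
first and is disjoint from the second. -/
def RegSep {A : Type} (L1 L2 : Set (List A)) : Prop :=
  ∃ R : Set (List A), IsRegularLang R ∧ L1 ⊆ R ∧ R ∩ L2 = ∅


namespace ULTS

variable {A : Type}

/-- A set of states is downward closed. -/
def DownClosed (U : ULTS A) (X : Set U.S) : Prop :=
  ∀ ⦃s t⦄, U.le s t → t ∈ X → s ∈ X

/-- An inductive invariant: a downward-closed set of states containing the initial
states, disjoint from the final states, and closed under the transition relation. -/
def InductiveInvariant (U : ULTS A) (X : Set U.S) : Prop :=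
  U.DownClosed X ∧ U.init ⊆ X ∧ U.final ∩ X = ∅ ∧ ∀ a, U.stepSet X a ⊆ X

end ULTS

namespace ULTS

variable {A : Type}

lemma reachSet_mono (U : ULTS A) : ∀ (w : List A) {P Q : Set U.S}, P ⊆ Q →
    U.reachSet P w ⊆ U.reachSet Q w := by
  intro w
  induction w with
  | nil => intro P Q h; exact h
  | cons a w ih =>
    intro P Q h
    apply ih
    intro x hx
    simp only [stepSet, Set.mem_iUnion] at hx ⊢
    obtain ⟨s, hs, hx⟩ := hx
    exact ⟨s, h hs, hx⟩

/-- simulation lifted to reach sets -/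
lemma reach_sim (U : ULTS A) : ∀ (w : List A) {P Q : Set U.S},
    (∀ p ∈ P, ∃ q ∈ Q, U.le p q) →
    ∀ x ∈ U.reachSet P w, ∃ y ∈ U.reachSet Q w, U.le x y := by
  intro w
  induction w with
  | nil => intro P Q h; exact h
  | cons a w ih =>
    intro P Q h
    apply ih
    intro p hp
    simp only [stepSet, Set.mem_iUnion] at hp
    obtain ⟨s, hs, hp⟩ := hp
    obtain ⟨t, ht, hle⟩ := h s hs
    obtain ⟨t', ht', hle'⟩ := U.sim a hle hp
    refine ⟨t', ?_, hle'⟩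
    simp only [stepSet, Set.mem_iUnion]
    exact ⟨t, ht, ht'⟩

end ULTS

/-- A ULTS has an empty language iff it admits an inductive
invariant. -/
theorem lang_empty_iff_inductiveInvariant {A : Type} [Finite A] (U : ULTS A) :
    U.lang = ∅ ↔ ∃ X : Set U.S, U.InductiveInvariant X := by
  constructor
  · intro hL
    refine ⟨{s | ∀ w : List A, U.reachSet {s} w ∩ U.final = ∅}, ?_, ?_, ?_, ?_⟩
    · -- downward closed, via simulation
      intro s t hle ht w
      ext x
      simp only [Set.mem_inter_iff, Set.mem_empty_iff_false, iff_false, not_and]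
      intro hx hfx
      obtain ⟨y, hy, hxy⟩ := U.reach_sim w (P := {s}) (Q := {t})
        (by rintro p rfl; exact ⟨t, rfl, hle⟩) x hx
      have := ht w
      exact absurd (Set.eq_empty_iff_forall_notMem.mp this y
        ⟨hy, U.final_up hfx hxy⟩) (fun h => h)
    · -- init ⊆ X
      intro s hs w
      ext x
      simp only [Set.mem_inter_iff, Set.mem_empty_iff_false, iff_false, not_and]
      intro hx hfx
      have : x ∈ U.reachSet U.init w :=
        U.reachSet_mono w (Set.singleton_subset_iff.mpr hs) hx
      have : w ∈ U.lang := ⟨x, this, hfx⟩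
      rw [hL] at this
      exact this
    · -- disjoint from final
      ext s
      simp only [Set.mem_inter_iff, Set.mem_empty_iff_false, iff_false, not_and]
      intro hf hX
      have := hX []
      exact Set.eq_empty_iff_forall_notMem.mp this s ⟨rfl, hf⟩
    · -- closed under step
      intro a s hs w
      simp only [ULTS.stepSet, Set.mem_iUnion] at hs
      obtain ⟨t, ht, hst⟩ := hs
      ext x
      simp only [Set.mem_inter_iff, Set.mem_empty_iff_false, iff_false, not_and]
      intro hx hfx
      have hsub : U.reachSet {s} w ⊆ U.reachSet {t} (a :: w) := by
        show U.reachSet {s} w ⊆ U.reachSet (U.stepSet {t} a) w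
        apply U.reachSet_mono
        intro y hy
        simp only [ULTS.stepSet, Set.mem_iUnion]
        exact ⟨t, rfl, hy ▸ hst⟩
      exact Set.eq_empty_iff_forall_notMem.mp (ht (a :: w)) x ⟨hsub hx, hfx⟩
  · rintro ⟨X, hdown, hinit, hfin, hstep⟩
    ext w
    simp only [Set.mem_empty_iff_false, iff_false]
    intro hw
    obtain ⟨x, hx, hfx⟩ := hw
    have key : ∀ (w : List A) (P : Set U.S), P ⊆ X → U.reachSet P w ⊆ X := by
      intro w
      induction w with
      | nil => intro P h; exact h
      | cons a w ih =>
        intro P h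
        apply ih
        intro y hy
        apply hstep a
        simp only [ULTS.stepSet, Set.mem_iUnion] at hy ⊢
        obtain ⟨s, hs, hy⟩ := hy
        exact ⟨s, h hs, hy⟩
    have hxX : x ∈ X := key w U.init hinit hx
    exact Set.eq_empty_iff_forall_notMem.mp hfin x ⟨hfx, hxX⟩
end

section
/- Let U be a finitely branching WSTS over a finite alphabet Σ, i.e., the set of initial states and every set δ(s,a) are finite. Then there exists a deterministic WSTS V over Σ with L(V) = L(U). -/
/-- A ULTS is finitely branching if the set of initial states and every transition
image are finite. -/
def ULTS.FinitelyBranching {A : Type} (U : ULTS A) : Prop :=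
  U.init.Finite ∧ ∀ s a, (U.tr s a).Finite


namespace ULTS

variable {A : Type}

theorem stepSet_finite (U : ULTS A) (hfb : ∀ s a, (U.tr s a).Finite)
    {P : Set U.S} (hP : P.Finite) (a : A) : (U.stepSet P a).Finite :=
  Set.Finite.biUnion hP (fun s _ => hfb s a)

theorem mem_stepSet {U : ULTS A} {P : Set U.S} {a : A} {s' : U.S} :
    s' ∈ U.stepSet P a ↔ ∃ s ∈ P, s' ∈ U.tr s a := by
  simp [ULTS.stepSet]

/-- Powerset determinization of a finitely branching ULTS. -/
def det (U : ULTS A) (hfb : U.FinitelyBranching) : ULTS A where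
  S := {P : Set U.S // P.Finite}
  le P Q := ∀ s ∈ P.1, ∃ t ∈ Q.1, U.le s t
  le_refl P s hs := ⟨s, hs, U.le_refl s⟩
  le_trans P Q R hPQ hQR s hs := by
    obtain ⟨t, ht, hst⟩ := hPQ s hs
    obtain ⟨u, hu, htu⟩ := hQR t ht
    exact ⟨u, hu, U.le_trans hst htu⟩
  init := {⟨U.init, hfb.1⟩}
  tr P a := {⟨U.stepSet P.1 a, U.stepSet_finite hfb.2 P.2 a⟩}
  final := {P | (P.1 ∩ U.final).Nonempty}
  final_up := by
    rintro P Q ⟨s, hsP, hsF⟩ hPQ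
    obtain ⟨t, htQ, hst⟩ := hPQ s hsP
    exact ⟨t, htQ, U.final_up hsF hst⟩
  sim := by
    rintro P Q a P' hPQ rfl
    refine ⟨_, rfl, ?_⟩
    intro s' hs'
    obtain ⟨s, hsP, hs'tr⟩ := mem_stepSet.mp hs'
    obtain ⟨t, htQ, hst⟩ := hPQ s hsP
    obtain ⟨t', ht'tr, hst'⟩ := U.sim a hst hs'tr
    exact ⟨t', mem_stepSet.mpr ⟨t, htQ, ht'tr⟩, hst'⟩

theorem reachSet_finite (U : ULTS A) (hfb : ∀ s a, (U.tr s a).Finite) :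
    ∀ (w : List A) {P : Set U.S}, P.Finite → (U.reachSet P w).Finite
  | [], _, hP => hP
  | a :: w, P, hP =>
    U.reachSet_finite hfb w (U.stepSet_finite hfb hP a)

theorem det_reachSet (U : ULTS A) (hfb : U.FinitelyBranching) :
    ∀ (w : List A) (P : {P : Set U.S // P.Finite}),
      (U.det hfb).reachSet {P} w = {⟨U.reachSet P.1 w, U.reachSet_finite hfb.2 w P.2⟩}
  | [], P => rfl
  | a :: w, P => by
    have hstep : (U.det hfb).stepSet {P} a
        = {(⟨U.stepSet P.1 a, U.stepSet_finite hfb.2 P.2 a⟩ : {P : Set U.S // P.Finite})} := by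
      ext Q
      simp [ULTS.stepSet, ULTS.det]
      exact Iff.of_eq (congrArg (Q ∈ ·) (Set.biUnion_singleton P _))
    show (U.det hfb).reachSet ((U.det hfb).stepSet {P} a) w = _
    rw [hstep, U.det_reachSet hfb w]
    rfl

theorem det_lang (U : ULTS A) (hfb : U.FinitelyBranching) :
    (U.det hfb).lang = U.lang := by
  ext w
  have h := U.det_reachSet hfb w ⟨U.init, hfb.1⟩
  have hinit : (U.det hfb).init = {(⟨U.init, hfb.1⟩ : {P : Set U.S // P.Finite})} := rfl
  simp only [ULTS.lang, Set.mem_setOf_eq, hinit, h]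
  constructor
  · rintro ⟨Q, hQ1, hQ2⟩
    replace hQ1 := Set.eq_of_mem_singleton hQ1
    subst hQ1
    exact hQ2
  · intro hne
    exact ⟨_, rfl, hne⟩

theorem det_wqo (U : ULTS A) (hwqo : U.IsWQO) (hfb : U.FinitelyBranching) :
    (U.det hfb).IsWQO := by
  intro f
  haveI : IsRefl U.S U.le := ⟨U.le_refl⟩
  haveI : IsTrans U.S U.le := ⟨fun _ _ _ h1 h2 => U.le_trans h1 h2⟩
  have huniv : (Set.univ : Set U.S).PartiallyWellOrderedOn U.le := by
    rw [Set.partiallyWellOrderedOn_iff_exists_lt]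
    intro g _
    obtain ⟨i, j, hij, hle⟩ := hwqo g
    exact ⟨i, j, hij, hle⟩
  haveI : IsPreorder U.S U.le := {}
  have hlists := Set.PartiallyWellOrderedOn.partiallyWellOrderedOn_sublistForall₂
    (r := U.le) huniv
  set g : ℕ → List U.S := fun n => (f n).2.toFinset.toList with hg
  obtain ⟨i, j, hij, hsub⟩ := hlists.exists_lt (f := g) (fun n x _ => Set.mem_univ x)
  refine ⟨i, j, hij, ?_⟩
  intro s hs
  rw [List.sublistForall₂_iff] at hsub
  obtain ⟨l, hforall, hsubl⟩ := hsub
  have hsg : s ∈ g i := by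
    simpa [hg, Set.Finite.mem_toFinset] using hs
  obtain ⟨⟨k, hk⟩, hks⟩ := List.get_of_mem hsg
  obtain ⟨hlen, hget⟩ := List.forall₂_iff_get.mp hforall
  have hk' : k < l.length := by omega
  refine ⟨l.get ⟨k, hk'⟩, ?_, ?_⟩
  · have : l.get ⟨k, hk'⟩ ∈ g j := hsubl.subset (l.get_mem _)
    simpa [hg, Set.Finite.mem_toFinset] using this
  · have := hget k hk hk'
    rwa [hks] at this

theorem det_deterministic (U : ULTS A) (hfb : U.FinitelyBranching) :
    (U.det hfb).Deterministic :=
  ⟨⟨_, rfl⟩, fun s a => ⟨_, rfl⟩⟩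

end ULTS

/-- Every finitely branching WSTS can be determinized: its
language is accepted by a deterministic WSTS. -/
theorem finitelyBranching_wsts_determinizable {A : Type} [Finite A]
    (U : ULTS A) (hwqo : U.IsWQO) (hfb : U.FinitelyBranching) :
    ∃ V : ULTS A, V.IsWQO ∧ V.Deterministic ∧ V.lang = U.lang := by
  exact ⟨U.det hfb, U.det_wqo hwqo hfb, U.det_deterministic hfb, U.det_lang hfb⟩
end
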